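/- Let a, b be nonnegative integers and let L be a ℤ-linear automorphism of ℤ³ such that L maps the set {(0,0,1), (-a,a,1), (0,0,-1), (a,-a,-1)} onto the set {(0,0,1), (-b,b,1), (0,0,-1), (b,-b,-1)} and maps the set {(1,0,0), (0,1,0), (-1,0,0), (0,-1,0)} onto itself. Then a = b. -/
import Mathlib

set_option maxHeartbeats 1000000 in
/-- If a `ℤ`-linear automorphism of `ℤ³` maps the set of characteristic vectors
`{±(0,0,1), ±(-a,a,1)}` onto `{±(0,0,1), ±(-b,b,1)}` and the set
`{±(1,0,0), ±(0,1,0)}` onto itself, then `a = b`. -/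
theorem char_vectors_rigidity (a b : ℤ) (ha : 0 ≤ a) (hb : 0 ≤ b)
    (L : (Fin 3 → ℤ) ≃ₗ[ℤ] (Fin 3 → ℤ))
    (h1 : (⇑L) '' {![0, 0, 1], ![-a, a, 1], ![0, 0, -1], ![a, -a, -1]} =
      {![0, 0, 1], ![-b, b, 1], ![0, 0, -1], ![b, -b, -1]})
    (h2 : (⇑L) '' {![1, 0, 0], ![0, 1, 0], ![-1, 0, 0], ![0, -1, 0]} =
      {![1, 0, 0], ![0, 1, 0], ![-1, 0, 0], ![0, -1, 0]}) :
    a = b := by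
  obtain ⟨p, hp⟩ : ∃ x, L ![1,0,0] = x := ⟨_, rfl⟩
  obtain ⟨q, hq⟩ : ∃ x, L ![0,1,0] = x := ⟨_, rfl⟩
  obtain ⟨r, hr⟩ : ∃ x, L ![0,0,1] = x := ⟨_, rfl⟩
  have hvec : (![-a,a,1] : Fin 3 → ℤ) = a • ![0,1,0] - a • ![1,0,0] + ![0,0,1] := by
    funext i; fin_cases i <;> simp
  have hLaq : L ![-a,a,1] = a • q - a • p + r := by
    rw [hvec, map_add, map_sub, map_smul, map_smul, hp, hq, hr]
  have hne : p ≠ q := by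
    rintro rfl
    have := L.injective (hp.trans hq.symm)
    have := congrFun this 0
    simp at this
  have hu1 : p ∈ ({![1,0,0], ![0,1,0], ![-1,0,0], ![0,-1,0]} : Set (Fin 3 → ℤ)) := by
    rw [← hp, ← h2]; exact Set.mem_image_of_mem _ (by simp)
  have hu2 : q ∈ ({![1,0,0], ![0,1,0], ![-1,0,0], ![0,-1,0]} : Set (Fin 3 → ℤ)) := by
    rw [← hq, ← h2]; exact Set.mem_image_of_mem _ (by simp)
  have hu3 : r ∈ ({![0,0,1], ![-b,b,1], ![0,0,-1], ![b,-b,-1]} : Set (Fin 3 → ℤ)) := by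
    rw [← hr, ← h1]; exact Set.mem_image_of_mem _ (by simp)
  have hw : a • q - a • p + r ∈
      ({![0,0,1], ![-b,b,1], ![0,0,-1], ![b,-b,-1]} : Set (Fin 3 → ℤ)) := by
    rw [← hLaq, ← h1]; exact Set.mem_image_of_mem _ (by simp)
  have himg : ∀ t : Fin 3 → ℤ,
      t ∈ ({![0,0,1], ![-b,b,1], ![0,0,-1], ![b,-b,-1]} : Set (Fin 3 → ℤ)) →
      r = t ∨ a • q - a • p + r = t ∨ -r = t ∨ -(a • q - a • p + r) = t := by
    intro t ht
    rw [← h1] at ht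
    obtain ⟨v, hv, hLv⟩ := ht
    simp only [Set.mem_insert_iff, Set.mem_singleton_iff] at hv
    rcases hv with rfl|rfl|rfl|rfl
    · left; rw [← hr]; exact hLv
    · right; left; rw [← hLaq]; exact hLv
    · right; right; left
      have h' : (![0,0,-1] : Fin 3 → ℤ) = -![0,0,1] := by funext i; fin_cases i <;> simp
      rw [h', map_neg, hr] at hLv; exact hLv
    · right; right; right
      have h' : (![a,-a,-1] : Fin 3 → ℤ) = -![-a,a,1] := by funext i; fin_cases i <;> simp
      rw [h', map_neg, hLaq] at hLv; exact hLv
  have hB2 := himg ![-b,b,1] (by simp)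
  have hC := himg ![0,0,1] (by simp)
  clear himg hp hq hr hLaq hvec h1 h2
  simp only [Set.mem_insert_iff, Set.mem_singleton_iff] at hu1 hu2
  rcases hu1 with rfl|rfl|rfl|rfl <;> rcases hu2 with rfl|rfl|rfl|rfl <;>
    first
    | exact absurd rfl hne
    | (simp only [Set.mem_insert_iff, Set.mem_singleton_iff, funext_iff, Fin.forall_fin_succ,
        IsEmpty.forall_iff, Pi.smul_apply, Pi.add_apply, Pi.sub_apply, Pi.neg_apply,
        smul_eq_mul, Matrix.cons_val_zero, Matrix.cons_val_succ, Matrix.cons_val_one,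
        Matrix.head_cons, Fin.succ_zero_eq_one, and_true, mul_one, mul_zero, mul_neg,
        ne_eq] at hu3 hw hB2 hC
       omega)
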